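/- Let q₁ be a unit eigenvector of C for its largest eigenvalue λ₁, let x₁* = c₁q₁ for any constant c₁ ≠ 0, and set L₁ = 6λ₁. At any time t with x̄^(t) ≠ 0, the stacked tracking variable satisfies the bound (Σ_{i=1}^M ‖s_i^(t)‖²)^{1/2} ≤ (Σ_{i=1}^M ‖s_i^(t) − g^(t)‖²)^{1/2} + L₁ (Σ_{i=1}^M ‖x_i^(t) − x̄^(t)‖²)^{1/2} + L₁ √M ‖x̄^(t) − x₁*‖. -/

import Mathlib

set_option autoImplicit false

open scoped RealInnerProductSpace

/-- `matVec A v` is the matrix-vector product `A v`, viewed as a map on Euclidean space. -/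
noncomputable def matVec {n : ℕ} (A : Matrix (Fin n) (Fin n) ℝ)
    (v : EuclideanSpace ℝ (Fin n)) : EuclideanSpace ℝ (Fin n) :=
  WithLp.toLp 2 (A.mulVec v)

/-- The local Krasulina pseudo-gradient `h_i(v) = C_i v − (vᵀC_i v/‖v‖²) v`. -/
noncomputable def pgrad {d : ℕ} (A : Matrix (Fin d) (Fin d) ℝ)
    (v : EuclideanSpace ℝ (Fin d)) : EuclideanSpace ℝ (Fin d) :=
  matVec A v - (⟪v, matVec A v⟫ / ‖v‖ ^ 2) • v

open Matrix

namespace FP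
variable {n : ℕ}

lemma matVec_sub (A : Matrix (Fin n) (Fin n) ℝ) (v w : EuclideanSpace ℝ (Fin n)) :
    matVec A (v - w) = matVec A v - matVec A w := by simp [matVec, Matrix.mulVec_sub]

lemma matVec_add (A : Matrix (Fin n) (Fin n) ℝ) (v w : EuclideanSpace ℝ (Fin n)) :
    matVec A (v + w) = matVec A v + matVec A w := by simp [matVec, Matrix.mulVec_add]

lemma matVec_smul (A : Matrix (Fin n) (Fin n) ℝ) (c : ℝ) (v : EuclideanSpace ℝ (Fin n)) :
    matVec A (c • v) = c • matVec A v := by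
  simp [matVec, Matrix.mulVec_smul]

lemma sum_matVec {ι : Type*} [Fintype ι] (A : ι → Matrix (Fin n) (Fin n) ℝ)
    (v : EuclideanSpace ℝ (Fin n)) :
    matVec (∑ i, A i) v = ∑ i, matVec (A i) v := by
  classical
  have h : ∀ st : Finset ι, matVec (∑ i ∈ st, A i) v = ∑ i ∈ st, matVec (A i) v := by
    intro st
    induction st using Finset.cons_induction with
    | empty =>
      simp [matVec]
    | cons a st ha ih =>
      rw [Finset.sum_cons, Finset.sum_cons, ← ih]
      simp [matVec, Matrix.add_mulVec]
  exact h Finset.univ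

lemma inner_matVec (A : Matrix (Fin n) (Fin n) ℝ) (v w : EuclideanSpace ℝ (Fin n)) :
    ⟪v, matVec A w⟫ = v ⬝ᵥ A.mulVec w := by
  simp [matVec, PiLp.inner_apply, dotProduct, RCLike.inner_apply, mul_comm]

lemma transpose_eq {A : Matrix (Fin n) (Fin n) ℝ} (hA : A.IsHermitian) : Aᵀ = A := by
  rw [← Matrix.conjTranspose_eq_transpose_of_trivial]; exact hA.eq

lemma inner_matVec_symm {A : Matrix (Fin n) (Fin n) ℝ} (hA : A.IsHermitian)
    (v w : EuclideanSpace ℝ (Fin n)) :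
    ⟪v, matVec A w⟫ = ⟪w, matVec A v⟫ := by
  rw [inner_matVec, inner_matVec, Matrix.dotProduct_mulVec, ← Matrix.mulVec_transpose,
    transpose_eq hA, dotProduct_comm]

open scoped MatrixOrder in
/-- operator norm bound from quadratic form bound, for PSD matrices -/
lemma opnorm_bound {A : Matrix (Fin n) (Fin n) ℝ} (hA : A.PosSemidef)
    {lam1 : ℝ} (hl : 0 ≤ lam1)
    (hq : ∀ z : EuclideanSpace ℝ (Fin n), ⟪z, matVec A z⟫ ≤ lam1 * ‖z‖ ^ 2)
    (z : EuclideanSpace ℝ (Fin n)) : ‖matVec A z‖ ≤ lam1 * ‖z‖ := by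
  set S := CFC.sqrt A with hS
  have hSps : S.PosSemidef := Matrix.nonneg_iff_posSemidef.mp (CFC.sqrt_nonneg A)
  have hSS : S * S = A := CFC.sqrt_mul_sqrt_self A hA.nonneg
  have key : ∀ w : EuclideanSpace ℝ (Fin n), ‖matVec S w‖ ≤ Real.sqrt lam1 * ‖w‖ := by
    intro w
    have h1 : ‖matVec S w‖ ^ 2 = ⟪w, matVec A w⟫ := by
      rw [← real_inner_self_eq_norm_sq,
        show matVec A w = matVec S (matVec S w) from by
          simp only [matVec, WithLp.ofLp_toLp, Matrix.mulVec_mulVec, hSS],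
        inner_matVec_symm hSps.1 w (matVec S w)]
    have h2 : ‖matVec S w‖ ^ 2 ≤ (Real.sqrt lam1 * ‖w‖) ^ 2 := by
      rw [h1, mul_pow, Real.sq_sqrt hl]
      exact hq w
    calc ‖matVec S w‖ = Real.sqrt (‖matVec S w‖ ^ 2) := (Real.sqrt_sq (norm_nonneg _)).symm
      _ ≤ Real.sqrt ((Real.sqrt lam1 * ‖w‖) ^ 2) := Real.sqrt_le_sqrt h2
      _ = Real.sqrt lam1 * ‖w‖ := Real.sqrt_sq (by positivity)
  calc ‖matVec A z‖ = ‖matVec S (matVec S z)‖ := by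
        rw [show matVec S (matVec S z) = matVec A z from by
          simp only [matVec, WithLp.ofLp_toLp, Matrix.mulVec_mulVec, hSS]]
    _ ≤ Real.sqrt lam1 * ‖matVec S z‖ := key _
    _ ≤ Real.sqrt lam1 * (Real.sqrt lam1 * ‖z‖) := by
        exact mul_le_mul_of_nonneg_left (key z) (Real.sqrt_nonneg _)
    _ = lam1 * ‖z‖ := by rw [← mul_assoc, Real.mul_self_sqrt hl]

lemma psd_inner_nonneg {A : Matrix (Fin n) (Fin n) ℝ} (hA : A.PosSemidef)
    (v : EuclideanSpace ℝ (Fin n)) : 0 ≤ ⟪v, matVec A v⟫ := by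
  rw [inner_matVec]
  have := hA.dotProduct_mulVec_nonneg v
  simpa using this

lemma norm_unit {v : EuclideanSpace ℝ (Fin n)} (hv : v ≠ 0) : ‖(‖v‖⁻¹ • v : EuclideanSpace ℝ (Fin n))‖ = 1 := by
  rw [norm_smul, norm_inv, norm_norm]
  exact inv_mul_cancel₀ (norm_ne_zero_iff.mpr hv)

lemma rho_smul_unit (A : Matrix (Fin n) (Fin n) ℝ) {v : EuclideanSpace ℝ (Fin n)} (hv : v ≠ 0) :
    ⟪v, matVec A v⟫ / ‖v‖ ^ 2 = ⟪(‖v‖⁻¹ • v : EuclideanSpace ℝ (Fin n)), matVec A (‖v‖⁻¹ • v)⟫ := by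
  have hn : ‖v‖ ≠ 0 := norm_ne_zero_iff.mpr hv
  rw [matVec_smul, real_inner_smul_left, real_inner_smul_right, pow_two,
    div_eq_mul_inv, mul_inv]
  ring

lemma rho_abs_bound {A : Matrix (Fin n) (Fin n) ℝ} (hA : A.PosSemidef)
    {lam1 : ℝ}
    (hq : ∀ z : EuclideanSpace ℝ (Fin n), ⟪z, matVec A z⟫ ≤ lam1 * ‖z‖ ^ 2)
    {v : EuclideanSpace ℝ (Fin n)} (hv : v ≠ 0) :
    |⟪v, matVec A v⟫ / ‖v‖ ^ 2| ≤ lam1 := by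
  have hn : (0:ℝ) < ‖v‖ ^ 2 := by
    have := norm_pos_iff.mpr hv
    positivity
  rw [abs_div, abs_of_nonneg (psd_inner_nonneg hA v), abs_of_nonneg hn.le,
    div_le_iff₀ hn]
  exact hq v

lemma unit_diff_mul_norm {v w : EuclideanSpace ℝ (Fin n)} (hv : v ≠ 0) (hw : w ≠ 0) :
    ‖(‖v‖⁻¹ • v : EuclideanSpace ℝ (Fin n)) - ‖w‖⁻¹ • w‖ * ‖w‖ ≤ 2 * ‖v - w‖ := by
  have hnv : (0:ℝ) < ‖v‖ := norm_pos_iff.mpr hv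
  have hnw : (0:ℝ) < ‖w‖ := norm_pos_iff.mpr hw
  have decomp : (‖v‖⁻¹ • v : EuclideanSpace ℝ (Fin n)) - ‖w‖⁻¹ • w
      = ‖w‖⁻¹ • (v - w) + (‖v‖⁻¹ - ‖w‖⁻¹) • v := by module
  have h1 : ‖(‖v‖⁻¹ • v : EuclideanSpace ℝ (Fin n)) - ‖w‖⁻¹ • w‖
      ≤ ‖w‖⁻¹ * ‖v - w‖ + |‖v‖⁻¹ - ‖w‖⁻¹| * ‖v‖ := by
    rw [decomp]
    refine (norm_add_le _ _).trans ?_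
    rw [norm_smul, norm_smul]
    simp [abs_of_nonneg (le_of_lt (inv_pos.mpr hnw)), Real.norm_eq_abs]
  have h2 : |‖v‖⁻¹ - ‖w‖⁻¹| * ‖v‖ = |‖w‖ - ‖v‖| * ‖w‖⁻¹ := by
    rw [show ‖v‖⁻¹ - ‖w‖⁻¹ = (‖w‖ - ‖v‖) / (‖v‖ * ‖w‖) by field_simp, abs_div,
      abs_of_nonneg (by positivity : (0:ℝ) ≤ ‖v‖ * ‖w‖)]
    field_simp
  have h3 : |‖w‖ - ‖v‖| ≤ ‖v - w‖ := by
    rw [norm_sub_rev]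
    exact abs_norm_sub_norm_le w v
  have h4 : ‖(‖v‖⁻¹ • v : EuclideanSpace ℝ (Fin n)) - ‖w‖⁻¹ • w‖
      ≤ ‖w‖⁻¹ * ‖v - w‖ + ‖v - w‖ * ‖w‖⁻¹ := by
    refine h1.trans ?_
    rw [h2]
    have := mul_le_mul_of_nonneg_right h3 (le_of_lt (inv_pos.mpr hnw))
    linarith
  calc ‖(‖v‖⁻¹ • v : EuclideanSpace ℝ (Fin n)) - ‖w‖⁻¹ • w‖ * ‖w‖
      ≤ (‖w‖⁻¹ * ‖v - w‖ + ‖v - w‖ * ‖w‖⁻¹) * ‖w‖ :=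
        mul_le_mul_of_nonneg_right h4 hnw.le
    _ = 2 * ‖v - w‖ * (‖w‖⁻¹ * ‖w‖) := by ring
    _ = 2 * ‖v - w‖ := by rw [inv_mul_cancel₀ hnw.ne']; ring

lemma rho_diff_mul_norm {A : Matrix (Fin n) (Fin n) ℝ} (hA : A.PosSemidef)
    {lam1 : ℝ} (hl : 0 ≤ lam1)
    (hq : ∀ z : EuclideanSpace ℝ (Fin n), ⟪z, matVec A z⟫ ≤ lam1 * ‖z‖ ^ 2)
    {v w : EuclideanSpace ℝ (Fin n)} (hv : v ≠ 0) (hw : w ≠ 0) :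
    |⟪v, matVec A v⟫ / ‖v‖ ^ 2 - ⟪w, matVec A w⟫ / ‖w‖ ^ 2| * ‖w‖ ≤ 4 * lam1 * ‖v - w‖ := by
  set u : EuclideanSpace ℝ (Fin n) := ‖v‖⁻¹ • v with hu
  set z : EuclideanSpace ℝ (Fin n) := ‖w‖⁻¹ • w with hz
  have hun : ‖u‖ = 1 := norm_unit hv
  have hzn : ‖z‖ = 1 := norm_unit hw
  have hop := opnorm_bound hA hl hq
  have hid : ⟪u, matVec A u⟫ - ⟪z, matVec A z⟫ = ⟪u - z, matVec A (u + z)⟫ := by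
    rw [matVec_add, inner_sub_left, inner_add_right, inner_add_right,
      inner_matVec_symm hA.1 u z]
    ring
  have habs : |⟪u, matVec A u⟫ - ⟪z, matVec A z⟫| ≤ 2 * lam1 * ‖u - z‖ := by
    rw [hid]
    refine (abs_real_inner_le_norm _ _).trans ?_
    have h5 : ‖matVec A (u + z)‖ ≤ lam1 * 2 := by
      refine (hop _).trans ?_
      have h6 := norm_add_le u z
      rw [hun, hzn] at h6
      have : ‖u + z‖ ≤ 2 := by linarith
      exact mul_le_mul_of_nonneg_left this hl
    calc ‖u - z‖ * ‖matVec A (u + z)‖ ≤ ‖u - z‖ * (lam1 * 2) :=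
          mul_le_mul_of_nonneg_left h5 (norm_nonneg _)
      _ = 2 * lam1 * ‖u - z‖ := by ring
  rw [rho_smul_unit A hv, rho_smul_unit A hw]
  calc |⟪u, matVec A u⟫ - ⟪z, matVec A z⟫| * ‖w‖ ≤ (2 * lam1 * ‖u - z‖) * ‖w‖ :=
        mul_le_mul_of_nonneg_right habs (norm_nonneg _)
    _ = 2 * lam1 * (‖u - z‖ * ‖w‖) := by ring
    _ ≤ 2 * lam1 * (2 * ‖v - w‖) := by
        exact mul_le_mul_of_nonneg_left (unit_diff_mul_norm hv hw) (by positivity)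
    _ = 4 * lam1 * ‖v - w‖ := by ring

lemma sum_norm_le_sqrt {m : ℕ} (y : Fin m → EuclideanSpace ℝ (Fin n)) :
    ∑ i, ‖y i‖ ≤ Real.sqrt m * Real.sqrt (∑ i, ‖y i‖ ^ 2) := by
  have h := sq_sum_le_card_mul_sum_sq (s := (Finset.univ : Finset (Fin m)))
    (f := fun i => ‖y i‖)
  have h' : (∑ i, ‖y i‖) ^ 2 ≤ (m : ℝ) * ∑ i, ‖y i‖ ^ 2 := by
    simpa using h
  calc ∑ i, ‖y i‖ = Real.sqrt ((∑ i, ‖y i‖) ^ 2) :=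
        (Real.sqrt_sq (by positivity)).symm
    _ ≤ Real.sqrt ((m : ℝ) * ∑ i, ‖y i‖ ^ 2) := Real.sqrt_le_sqrt h'
    _ = Real.sqrt m * Real.sqrt (∑ i, ‖y i‖ ^ 2) := Real.sqrt_mul (by positivity) _

lemma pgrad_lipschitz {A : Matrix (Fin n) (Fin n) ℝ} (hA : A.PosSemidef)
    {lam1 : ℝ} (hl : 0 ≤ lam1)
    (hq : ∀ z : EuclideanSpace ℝ (Fin n), ⟪z, matVec A z⟫ ≤ lam1 * ‖z‖ ^ 2)
    {v w : EuclideanSpace ℝ (Fin n)} (hv : v ≠ 0) (hw : w ≠ 0) :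
    ‖pgrad A v - pgrad A w‖ ≤ 6 * lam1 * ‖v - w‖ := by
  set ρv : ℝ := ⟪v, matVec A v⟫ / ‖v‖ ^ 2 with hρv
  set ρw : ℝ := ⟪w, matVec A w⟫ / ‖w‖ ^ 2 with hρw
  have decomp : pgrad A v - pgrad A w
      = matVec A (v - w) - ρv • (v - w) - (ρv - ρw) • w := by
    rw [pgrad, pgrad, matVec_sub, ← hρv, ← hρw]
    module
  rw [decomp]
  have h1 : ‖matVec A (v - w)‖ ≤ lam1 * ‖v - w‖ := opnorm_bound hA hl hq _
  have h2 : ‖ρv • (v - w)‖ ≤ lam1 * ‖v - w‖ := by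
    rw [norm_smul, Real.norm_eq_abs]
    exact mul_le_mul_of_nonneg_right (rho_abs_bound hA hq hv) (norm_nonneg _)
  have h3 : ‖(ρv - ρw) • w‖ ≤ 4 * lam1 * ‖v - w‖ := by
    rw [norm_smul, Real.norm_eq_abs]
    exact rho_diff_mul_norm hA hl hq hv hw
  calc ‖matVec A (v - w) - ρv • (v - w) - (ρv - ρw) • w‖
      ≤ ‖matVec A (v - w) - ρv • (v - w)‖ + ‖(ρv - ρw) • w‖ := norm_sub_le _ _
    _ ≤ (‖matVec A (v - w)‖ + ‖ρv • (v - w)‖) + ‖(ρv - ρw) • w‖ := by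
        have := norm_sub_le (matVec A (v - w)) (ρv • (v - w))
        linarith
    _ ≤ 6 * lam1 * ‖v - w‖ := by linarith

end FP

open FP Matrix Finset in
set_option maxHeartbeats 2000000 in
/-- bound on the stacked tracking variable for FAST-PCA (first eigenvector).
`q1` is a unit eigenvector of `C = Σᵢ C_i` for its largest eigenvalue `λ₁ = lam ⟨0, _⟩`,
`x₁* = c₁ q₁` for a constant `c₁ ≠ 0`, `L₁ = 6λ₁`, `x̄^(t) = (1/M)Σᵢ x_i^(t)`, and
`g^(t) = (1/M)Σᵢ h_i(x_i^(t))`. -/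
theorem fastpca_tracking_variable_bound
    {d M : ℕ} (hd : 0 < d) (hM : 2 ≤ M)
    (Ci : Fin M → Matrix (Fin d) (Fin d) ℝ) (hCi : ∀ i, (Ci i).PosSemidef)
    (lam : Fin d → ℝ) (q : Fin d → EuclideanSpace ℝ (Fin d))
    (hq : Orthonormal ℝ q)
    (heig : ∀ l, matVec (∑ i, Ci i) (q l) = lam l • q l)
    (hmono : ∀ i j : Fin d, i ≤ j → lam j ≤ lam i) (hnn : ∀ l, 0 ≤ lam l)
    (W : Matrix (Fin M) (Fin M) ℝ) (hWs : W.IsSymm)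
    (hWnn : ∀ i j, 0 ≤ W i j)
    (hWrow : ∀ i, ∑ j, W i j = 1) (hWcol : ∀ j, ∑ i, W i j = 1)
    (μ : Fin M → ℝ) (u : Fin M → EuclideanSpace ℝ (Fin M)) (hu : Orthonormal ℝ u)
    (hWeig : ∀ i, matVec W (u i) = μ i • u i)
    (hμmono : ∀ i j : Fin M, i ≤ j → μ j ≤ μ i) (hμ0 : μ ⟨0, by omega⟩ = 1)
    (β : ℝ) (hβ : β = max |μ ⟨1, by omega⟩| |μ ⟨M - 1, by omega⟩|)
    (α : ℝ) (hα0 : 0 < α)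
    (x s : ℕ → Fin M → EuclideanSpace ℝ (Fin d))
    (hxnz : ∀ t i, x t i ≠ 0)
    (hxupd : ∀ t i, x (t + 1) i =
      (1 / 2 : ℝ) • x t i + ∑ j, (W i j / 2) • x t j + α • s t i)
    (hsupd : ∀ t i, s (t + 1) i =
      (1 / 2 : ℝ) • s t i + ∑ j, (W i j / 2) • s t j
        + pgrad (Ci i) (x (t + 1) i) - pgrad (Ci i) (x t i))
    (q1 : EuclideanSpace ℝ (Fin d)) (hq1norm : ‖q1‖ = 1)
    (hq1eig : matVec (∑ i, Ci i) q1 = lam ⟨0, hd⟩ • q1)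
    (c₁ : ℝ) (hc₁ : c₁ ≠ 0)
    (t : ℕ) (hbarnz : (M : ℝ)⁻¹ • ∑ i, x t i ≠ 0) :
    Real.sqrt (∑ i, ‖s t i‖ ^ 2) ≤
      Real.sqrt (∑ i, ‖s t i - (M : ℝ)⁻¹ • ∑ j, pgrad (Ci j) (x t j)‖ ^ 2) +
        6 * lam ⟨0, hd⟩ * Real.sqrt (∑ i, ‖x t i - (M : ℝ)⁻¹ • ∑ j, x t j‖ ^ 2) +
        6 * lam ⟨0, hd⟩ * Real.sqrt M * ‖(M : ℝ)⁻¹ • ∑ i, x t i - c₁ • q1‖ := by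
  classical
  set lam1 : ℝ := lam ⟨0, hd⟩ with hlam1
  have hlamnn : 0 ≤ lam1 := hnn _
  set Cm : Matrix (Fin d) (Fin d) ℝ := ∑ i, Ci i with hCm
  have hCherm : Cm.IsHermitian := by
    show Cmᴴ = Cm
    rw [hCm, Matrix.conjTranspose_sum]
    exact Finset.sum_congr rfl fun i _ => (hCi i).1
  -- orthonormal basis from q
  have hcard : Fintype.card (Fin d) = Module.finrank ℝ (EuclideanSpace ℝ (Fin d)) := by
    simp [finrank_euclideanSpace_fin]
  haveI : Nonempty (Fin d) := ⟨⟨0, hd⟩⟩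
  obtain ⟨b, hb⟩ : ∃ b : OrthonormalBasis (Fin d) ℝ (EuclideanSpace ℝ (Fin d)), ⇑b = q := by
    let bb := basisOfOrthonormalOfCardEqFinrank hq hcard
    have hbb : ⇑bb = q := coe_basisOfOrthonormalOfCardEqFinrank hq hcard
    have hon : Orthonormal ℝ (⇑bb) := by rwa [hbb]
    exact ⟨OrthonormalBasis.mk hon bb.span_eq.ge, by rw [OrthonormalBasis.coe_mk, hbb]⟩
  -- quadratic form bound for Cm
  have hquadC : ∀ z : EuclideanSpace ℝ (Fin d), ⟪z, matVec Cm z⟫ ≤ lam1 * ‖z‖ ^ 2 := by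
    intro z
    have hp := b.sum_inner_mul_inner z (matVec Cm z)
    have hp2 := b.sum_inner_mul_inner z z
    rw [hb] at hp hp2
    have hterm : ∀ l, ⟪q l, matVec Cm z⟫ = lam l * ⟪z, q l⟫ := by
      intro l
      rw [← inner_matVec_symm hCherm, heig, real_inner_smul_right]
    rw [← hp]
    have hsum1 : ∑ l, ⟪z, q l⟫ * ⟪q l, matVec Cm z⟫ = ∑ l, lam l * (⟪z, q l⟫ * ⟪q l, z⟫) := by
      refine Finset.sum_congr rfl fun l _ => ?_
      rw [hterm l, real_inner_comm (q l) z]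
      ring
    rw [hsum1]
    have hle : ∑ l, lam l * (⟪z, q l⟫ * ⟪q l, z⟫) ≤ ∑ l, lam1 * (⟪z, q l⟫ * ⟪q l, z⟫) := by
      refine Finset.sum_le_sum fun l _ => ?_
      have hnn2 : 0 ≤ ⟪z, q l⟫ * ⟪q l, z⟫ := by
        rw [real_inner_comm (q l) z]
        exact mul_self_nonneg _
      exact mul_le_mul_of_nonneg_right (hmono _ l (by simp [Fin.le_def])) hnn2
    refine hle.trans ?_
    rw [← Finset.mul_sum, hp2, real_inner_self_eq_norm_sq]
  -- per-node quadratic bound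
  have hquadCi : ∀ i (z : EuclideanSpace ℝ (Fin d)), ⟪z, matVec (Ci i) z⟫ ≤ lam1 * ‖z‖ ^ 2 := by
    intro i z
    refine le_trans ?_ (hquadC z)
    rw [hCm, sum_matVec, inner_sum]
    exact Finset.single_le_sum (f := fun j => ⟪z, matVec (Ci j) z⟫)
      (fun j _ => psd_inner_nonneg (hCi j) z) (Finset.mem_univ i)
  -- x* ≠ 0
  have hq1nz : q1 ≠ 0 := by
    intro h
    rw [h, norm_zero] at hq1norm
    norm_num at hq1norm
  have hxstar : (c₁ • q1 : EuclideanSpace ℝ (Fin d)) ≠ 0 := smul_ne_zero hc₁ hq1nz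
  -- sum of pseudo-gradients at x* vanishes
  have hxs2 : ‖(c₁ • q1 : EuclideanSpace ℝ (Fin d))‖ ^ 2 = c₁ ^ 2 := by
    rw [norm_smul, hq1norm, mul_one, Real.norm_eq_abs, sq_abs]
  have hxs2ne : ‖(c₁ • q1 : EuclideanSpace ℝ (Fin d))‖ ^ 2 ≠ 0 := by
    rw [hxs2]; exact pow_ne_zero 2 hc₁
  have hCxs : matVec Cm (c₁ • q1) = lam1 • (c₁ • q1 : EuclideanSpace ℝ (Fin d)) := by
    rw [matVec_smul, hCm, hq1eig, smul_comm]
  have hinnerxs : ∑ i, ⟪(c₁ • q1 : EuclideanSpace ℝ (Fin d)), matVec (Ci i) (c₁ • q1)⟫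
      = lam1 * ‖(c₁ • q1 : EuclideanSpace ℝ (Fin d))‖ ^ 2 := by
    rw [← inner_sum, ← sum_matVec, ← hCm, hCxs, real_inner_smul_right,
      real_inner_self_eq_norm_sq]
  have hsumz : ∑ i, pgrad (Ci i) (c₁ • q1) = 0 := by
    have hstep : ∑ i, pgrad (Ci i) (c₁ • q1)
        = matVec Cm (c₁ • q1)
          - ((∑ i, ⟪(c₁ • q1 : EuclideanSpace ℝ (Fin d)), matVec (Ci i) (c₁ • q1)⟫)
              / ‖(c₁ • q1 : EuclideanSpace ℝ (Fin d))‖ ^ 2) • (c₁ • q1 : EuclideanSpace ℝ (Fin d)) := by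
      simp only [pgrad]
      rw [Finset.sum_sub_distrib, ← Finset.sum_smul, ← Finset.sum_div, hCm, sum_matVec]
    rw [hstep, hinnerxs, hCxs, mul_div_assoc, div_self hxs2ne, mul_one, sub_self]
  -- Lipschitz bounds
  have hlip : ∀ i, ‖pgrad (Ci i) (x t i) - pgrad (Ci i) (c₁ • q1)‖
      ≤ 6 * lam1 * ‖x t i - c₁ • q1‖ :=
    fun i => pgrad_lipschitz (hCi i) hlamnn (hquadCi i) (hxnz t i) hxstar
  -- abbreviations
  set g : EuclideanSpace ℝ (Fin d) := (M : ℝ)⁻¹ • ∑ j, pgrad (Ci j) (x t j) with hg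
  set xb : EuclideanSpace ℝ (Fin d) := (M : ℝ)⁻¹ • ∑ j, x t j with hxb
  have hM0 : (0:ℝ) < M := by
    have : (2:ℝ) ≤ M := by exact_mod_cast hM
    linarith
  set r : ℝ := Real.sqrt M with hr
  have hr0 : 0 < r := Real.sqrt_pos.mpr hM0
  have hr2 : r * r = M := Real.mul_self_sqrt hM0.le
  -- step 1 : stacked triangle inequality
  set S : PiLp 2 (fun _ : Fin M => EuclideanSpace ℝ (Fin d)) := WithLp.toLp 2 fun i => s t i with hS
  set G : PiLp 2 (fun _ : Fin M => EuclideanSpace ℝ (Fin d)) := WithLp.toLp 2 fun _ => g with hG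
  have hSnorm : ‖S‖ = Real.sqrt (∑ i, ‖s t i‖ ^ 2) := by
    rw [PiLp.norm_eq_of_L2]
  have hSGnorm : ‖S - G‖ = Real.sqrt (∑ i, ‖s t i - g‖ ^ 2) := by
    rw [PiLp.norm_eq_of_L2]
    rfl
  have hGnorm : ‖G‖ = r * ‖g‖ := by
    rw [PiLp.norm_eq_of_L2]
    have hGsum : (∑ i : Fin M, ‖G i‖ ^ 2) = (M : ℝ) * ‖g‖ ^ 2 := by
      simp only [hG]
      rw [Finset.sum_const, Finset.card_univ, Fintype.card_fin, nsmul_eq_mul]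
    rw [hGsum, Real.sqrt_mul hM0.le, Real.sqrt_sq (norm_nonneg g), hr]
  have htri : Real.sqrt (∑ i, ‖s t i‖ ^ 2)
      ≤ Real.sqrt (∑ i, ‖s t i - g‖ ^ 2) + r * ‖g‖ := by
    rw [← hSnorm, ← hSGnorm, ← hGnorm]
    calc ‖S‖ = ‖S - G + G‖ := by rw [sub_add_cancel]
      _ ≤ ‖S - G‖ + ‖G‖ := norm_add_le _ _
  -- step 2 : bound on M * ‖g‖
  have hMg : (M : ℝ) * ‖g‖ = ‖∑ i, pgrad (Ci i) (x t i)‖ := by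
    rw [hg, norm_smul, Real.norm_eq_abs, abs_of_pos (inv_pos.mpr hM0), ← mul_assoc,
      mul_inv_cancel₀ hM0.ne', one_mul]
  have hgb : (M : ℝ) * ‖g‖
      ≤ 6 * lam1 * (∑ i, ‖x t i - xb‖) + 6 * lam1 * M * ‖xb - c₁ • q1‖ := by
    rw [hMg]
    calc ‖∑ i, pgrad (Ci i) (x t i)‖
        = ‖∑ i, (pgrad (Ci i) (x t i) - pgrad (Ci i) (c₁ • q1))‖ := by
          rw [Finset.sum_sub_distrib, hsumz, sub_zero]
      _ ≤ ∑ i, ‖pgrad (Ci i) (x t i) - pgrad (Ci i) (c₁ • q1)‖ := norm_sum_le _ _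
      _ ≤ ∑ i, 6 * lam1 * ‖x t i - c₁ • q1‖ := Finset.sum_le_sum fun i _ => hlip i
      _ ≤ ∑ i, 6 * lam1 * (‖x t i - xb‖ + ‖xb - c₁ • q1‖) := by
          refine Finset.sum_le_sum fun i _ => ?_
          refine mul_le_mul_of_nonneg_left ?_ (by positivity)
          have := dist_triangle (x t i) xb (c₁ • q1)
          simpa [dist_eq_norm] using this
      _ = 6 * lam1 * (∑ i, ‖x t i - xb‖) + 6 * lam1 * M * ‖xb - c₁ • q1‖ := by
          rw [← Finset.mul_sum, Finset.sum_add_distrib, Finset.sum_const, Finset.card_univ,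
            Fintype.card_fin, nsmul_eq_mul, mul_add]
          ring
  -- step 3 : Cauchy–Schwarz on the deviation sum
  have hcs : ∑ i, ‖x t i - xb‖ ≤ r * Real.sqrt (∑ i, ‖x t i - xb‖ ^ 2) := by
    rw [hr]
    exact sum_norm_le_sqrt (fun i => x t i - xb)
  -- step 4 : combine
  set b2 : ℝ := Real.sqrt (∑ i, ‖x t i - xb‖ ^ 2) with hb2
  set e : ℝ := ‖xb - c₁ • q1‖ with he
  have hfin : r * ‖g‖ ≤ 6 * lam1 * b2 + 6 * lam1 * r * e := by
    have hmul : r * (r * ‖g‖) ≤ r * (6 * lam1 * b2 + 6 * lam1 * r * e) := by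
      have h1 : (M : ℝ) * ‖g‖ ≤ 6 * lam1 * (r * b2) + 6 * lam1 * M * e := by
        refine hgb.trans ?_
        have := mul_le_mul_of_nonneg_left hcs (by positivity : (0:ℝ) ≤ 6 * lam1)
        linarith
      calc r * (r * ‖g‖) = (M : ℝ) * ‖g‖ := by rw [← mul_assoc, hr2]
        _ ≤ 6 * lam1 * (r * b2) + 6 * lam1 * M * e := h1
        _ = r * (6 * lam1 * b2 + 6 * lam1 * r * e) := by rw [← hr2]; ring
    exact le_of_mul_le_mul_left hmul hr0
  refine htri.trans ?_
  have : r * ‖g‖ ≤ 6 * lam1 * b2 + 6 * lam1 * r * e := hfin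
  linarith
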